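/- Let P ∈ ℝ^(2n×2n) be symmetric positive definite with block decomposition [[P11, P12],[P12ᵀ, P22]], and suppose there exists L such that P(A − LC) + (A − LC)ᵀP + I ≺ 0, where A = [[0, I],[0, 0]] and C = [I, 0]. Then −P12 − P12ᵀ − I ≻ 0; in particular P12 is invertible and every eigenvalue of P12 has negative real part. -/

import Mathlib

open Matrix

lemma dot_self_pos {n : ℕ} {x : Fin n → ℝ} (hx : x ≠ 0) : 0 < x ⬝ᵥ x := by
  have h0 : 0 ≤ x ⬝ᵥ x := by
    simp only [dotProduct]
    exact Finset.sum_nonneg fun i _ => mul_self_nonneg _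
  rcases h0.lt_or_eq with h | h
  · exact h
  · exact absurd ((dotProduct_self_eq_zero).mp h.symm) hx

lemma dot_transpose {n : ℕ} (S : Matrix (Fin n) (Fin n) ℝ) (x y : Fin n → ℝ) :
    x ⬝ᵥ (Sᵀ *ᵥ y) = y ⬝ᵥ (S *ᵥ x) := by
  rw [dotProduct_mulVec, vecMul_transpose, dotProduct_comm]

/-- Corollary 1: if P = [[P11, P12],[P12ᵀ, P22]] ≻ 0 and there exists L with
P(A − LC) + (A − LC)ᵀP + I ≺ 0 (A the block shift, C = [I, 0]), then
−P12 − P12ᵀ − I ≻ 0, P12 is invertible, and every eigenvalue of P12 has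
negative real part. -/
theorem corollary_P12_hurwitz (n : ℕ) (hn : 0 < n)
    (P11 P12 P22 : Matrix (Fin n) (Fin n) ℝ)
    (A : Matrix (Fin n ⊕ Fin n) (Fin n ⊕ Fin n) ℝ)
    (C : Matrix (Fin n) (Fin n ⊕ Fin n) ℝ)
    (hA : A = Matrix.fromBlocks 0 1 0 0)
    (hC : C = Matrix.fromCols 1 0)
    (hP : (Matrix.fromBlocks P11 P12 P12ᵀ P22).PosDef)
    (hL : ∃ L : Matrix (Fin n ⊕ Fin n) (Fin n) ℝ,
      (-((Matrix.fromBlocks P11 P12 P12ᵀ P22) * (A - L * C)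
        + (A - L * C)ᵀ * (Matrix.fromBlocks P11 P12 P12ᵀ P22) + 1)).PosDef) :
    (-P12 - P12ᵀ - 1).PosDef ∧ IsUnit P12.det ∧
      (∀ (μ : ℂ) (v : Fin n → ℂ), v ≠ 0 →
        (P12.map Complex.ofReal).mulVec v = μ • v → μ.re < 0) := by
  obtain ⟨L, hM⟩ := hL
  set M : Matrix (Fin n ⊕ Fin n) (Fin n ⊕ Fin n) ℝ :=
    -((Matrix.fromBlocks P11 P12 P12ᵀ P22) * (A - L * C)
        + (A - L * C)ᵀ * (Matrix.fromBlocks P11 P12 P12ᵀ P22) + 1) with hMdef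
  have hkey : ∀ i j, M (Sum.inr i) (Sum.inr j) = (-P12 - P12ᵀ - 1) i j := by
    intro i j
    subst hA hC
    simp only [hMdef]
    simp [Matrix.mul_apply, Fintype.sum_sum_type, Matrix.fromBlocks, Matrix.fromCols,
      Matrix.one_apply, Matrix.transpose_apply, Finset.sum_ite_eq, Finset.sum_ite_eq']
    ring
  -- part 1
  have hDpos : (-P12 - P12ᵀ - 1).PosDef := by
    refine Matrix.PosDef.of_dotProduct_mulVec_pos ?_ ?_
    · show (-P12 - P12ᵀ - 1)ᴴ = _
      ext i j
      simp [Matrix.conjTranspose_apply, Matrix.one_apply, eq_comm]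
      ring
    · intro x hx
      have hy : (Sum.elim 0 x : Fin n ⊕ Fin n → ℝ) ≠ 0 := by
        intro h
        apply hx
        ext i
        exact congrFun h (Sum.inr i)
      have h2 := hM.dotProduct_mulVec_pos hy
      have heq : star (Sum.elim 0 x : Fin n ⊕ Fin n → ℝ) ⬝ᵥ (M *ᵥ Sum.elim 0 x)
          = star x ⬝ᵥ ((-P12 - P12ᵀ - 1) *ᵥ x) := by
        simp [dotProduct, mulVec, Fintype.sum_sum_type, hkey]
      rw [heq] at h2
      exact h2
  refine ⟨hDpos, ?_, ?_⟩
  -- part 2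
  · rw [isUnit_iff_ne_zero]
    intro h0
    obtain ⟨v, hv0, hv⟩ := (Matrix.exists_mulVec_eq_zero_iff).mpr h0
    have h1 := hDpos.dotProduct_mulVec_pos hv0
    have e1 : star v ⬝ᵥ ((-P12 - P12ᵀ - 1) *ᵥ v) = -(v ⬝ᵥ v) := by
      have : star v = v := rfl
      rw [this, Matrix.sub_mulVec, Matrix.sub_mulVec, Matrix.neg_mulVec, hv,
        dotProduct_sub, dotProduct_sub, dot_transpose, hv]
      simp
    rw [e1] at h1
    have := dot_self_pos hv0
    linarith
  -- part 3
  · intro μ v hv0 heig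
    set a : Fin n → ℝ := fun i => (v i).re with ha
    set b : Fin n → ℝ := fun i => (v i).im with hb
    have hSa : P12 *ᵥ a = μ.re • a - μ.im • b := by
      ext i
      have h := congrFun heig i
      have hre := congrArg Complex.re h
      simpa [mulVec, dotProduct, Matrix.map_apply, Complex.re_sum, Pi.smul_apply,
        Complex.mul_re, mul_comm] using hre
    have hSb : P12 *ᵥ b = μ.re • b + μ.im • a := by
      ext i
      have h := congrFun heig i
      have him := congrArg Complex.im h
      simpa [mulVec, dotProduct, Matrix.map_apply, Complex.im_sum, Pi.smul_apply,
        Complex.mul_im, mul_comm] using him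
    have hab : a ≠ 0 ∨ b ≠ 0 := by
      by_contra h
      push_neg at h
      apply hv0
      ext i
      have h1 : a i = 0 := by rw [h.1]; rfl
      have h2 : b i = 0 := by rw [h.2]; rfl
      simp [Complex.ext_iff]
      exact ⟨h1, h2⟩
    have quad : ∀ x : Fin n → ℝ, x ⬝ᵥ ((-P12 - P12ᵀ - 1) *ᵥ x)
        = -(x ⬝ᵥ (P12 *ᵥ x)) - (x ⬝ᵥ (P12 *ᵥ x)) - x ⬝ᵥ x := by
      intro x
      rw [Matrix.sub_mulVec, Matrix.sub_mulVec, Matrix.neg_mulVec, dotProduct_sub,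
        dotProduct_sub, dot_transpose, dotProduct_neg]
      simp
    have hpos : 0 < a ⬝ᵥ ((-P12 - P12ᵀ - 1) *ᵥ a) + b ⬝ᵥ ((-P12 - P12ᵀ - 1) *ᵥ b) := by
      rcases hab with h | h
      · have h1 := hDpos.dotProduct_mulVec_pos h
        have h2 := hDpos.posSemidef.dotProduct_mulVec_nonneg b
        simp only [star_trivial] at h1 h2
        linarith [h1, h2]
      · have h1 := hDpos.posSemidef.dotProduct_mulVec_nonneg a
        have h2 := hDpos.dotProduct_mulVec_pos h
        simp only [star_trivial] at h1 h2
        linarith [h1, h2]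
    have es : 0 < a ⬝ᵥ a + b ⬝ᵥ b := by
      rcases hab with h | h
      · have := dot_self_pos h
        have h2 : 0 ≤ b ⬝ᵥ b := by
          simp only [dotProduct]; exact Finset.sum_nonneg fun i _ => mul_self_nonneg _
        linarith
      · have := dot_self_pos h
        have h2 : 0 ≤ a ⬝ᵥ a := by
          simp only [dotProduct]; exact Finset.sum_nonneg fun i _ => mul_self_nonneg _
        linarith
    have eqa : a ⬝ᵥ (P12 *ᵥ a) = μ.re * (a ⬝ᵥ a) - μ.im * (a ⬝ᵥ b) := by
      rw [hSa, dotProduct_sub, dotProduct_smul, dotProduct_smul]; simp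
    have eqb : b ⬝ᵥ (P12 *ᵥ b) = μ.re * (b ⬝ᵥ b) + μ.im * (a ⬝ᵥ b) := by
      rw [hSb, dotProduct_add, dotProduct_smul, dotProduct_smul, dotProduct_comm b a]; simp
    rw [quad a, quad b, eqa, eqb] at hpos
    nlinarith [es, hpos]
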